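/- For positive β and any x, x' ∈ ℝ, ∫_ℝ ψ_x(p)* ψ_{x'}(p) dp = (2ħ√β/(mπ(x'−x))) · sin(mπ(x'−x)/(2ħ√β)) when x ≠ x', where ψ_x(p) = √(m/π) β^{1/4} e^{−ixm arctan(p√β/m)/(ħ√β)} / √(m² + βp²). In particular this inner product vanishes if and only if x' − x is a nonzero integer multiple of 2ħ√β/m. -/

import Mathlib

open Real Complex MeasureTheory

/-- overlap of position eigenfunctions for positive β:
`∫ ψ_x* ψ_{x'} = (2 hbar √β/(mπ(x'−x))) sin(mπ(x'−x)/(2 hbar √β))` for `x ≠ x'`,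
and this vanishes iff `x' − x` is a nonzero integer multiple of `2 hbar √β/m`. -/
theorem eigenfunction_overlap
    (hbar m β : ℝ) (hhbar : 0 < hbar) (hm : 0 < m) (hβ : 0 < β)
    (ψ : ℝ → ℝ → ℂ)
    (hψ : ∀ x p : ℝ, ψ x p =
      ((Real.sqrt (m / Real.pi) * β ^ ((1 : ℝ) / 4) : ℝ) : ℂ) *
        Complex.exp (-Complex.I * x * m *
          (Real.arctan (p * Real.sqrt β / m)) / (hbar * Real.sqrt β)) /
        (Real.sqrt (m ^ 2 + β * p ^ 2) : ℂ)) :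
    ∀ x x' : ℝ, x ≠ x' →
      ((∫ p : ℝ, (starRingEnd ℂ) (ψ x p) * ψ x' p) =
        (((2 * hbar * Real.sqrt β / (m * Real.pi * (x' - x))) *
          Real.sin (m * Real.pi * (x' - x) / (2 * hbar * Real.sqrt β)) : ℝ) : ℂ)) ∧
      ((∫ p : ℝ, (starRingEnd ℂ) (ψ x p) * ψ x' p) = 0 ↔
        ∃ n : ℤ, n ≠ 0 ∧ x' - x = n * (2 * hbar * Real.sqrt β / m)) := by
  intro x x' hxx'
  have hπ : (0 : ℝ) < Real.pi := Real.pi_pos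
  have hsβ : (0 : ℝ) < Real.sqrt β := Real.sqrt_pos.mpr hβ
  set sβ : ℝ := Real.sqrt β with hsβdef
  have hm0 : m ≠ 0 := hm.ne'
  have hsβ0 : sβ ≠ 0 := hsβ.ne'
  have hh0 : hbar ≠ 0 := hhbar.ne'
  have hπ0 : Real.pi ≠ 0 := hπ.ne'
  have hdx : x' - x ≠ 0 := sub_ne_zero.mpr (Ne.symm hxx')
  have hdx' : x - x' ≠ 0 := sub_ne_zero.mpr hxx'
  set a : ℝ := m * (x - x') / (hbar * sβ) with hadef
  have ha0 : a ≠ 0 := by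
    rw [hadef]
    exact div_ne_zero (mul_ne_zero hm0 hdx') (mul_ne_zero hh0 hsβ0)
  -- the key integral computation via the substitution p = (m/√β) tan u
  have key : (∫ p : ℝ, (starRingEnd ℂ) (ψ x p) * ψ x' p)
      = ((2 / (Real.pi * a) * Real.sin (a * Real.pi / 2) : ℝ) : ℂ) := by
    set s : Set ℝ := Set.Ioo (-(Real.pi / 2)) (Real.pi / 2) with hsdef
    set f : ℝ → ℝ := fun u => m / sβ * Real.tan u with hfdef
    set f' : ℝ → ℝ := fun u => m / sβ * (1 / Real.cos u ^ 2) with hf'def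
    have hs : MeasurableSet s := measurableSet_Ioo
    have hcosne : ∀ u ∈ s, Real.cos u ≠ 0 := fun u hu =>
      (Real.cos_pos_of_mem_Ioo hu).ne'
    have hderiv : ∀ u ∈ s, HasDerivWithinAt f (f' u) s u := fun u hu =>
      ((Real.hasDerivAt_tan (hcosne u hu)).const_mul (m / sβ)).hasDerivWithinAt
    have hinj : Set.InjOn f s := by
      intro u hu v hv h
      apply Real.injOn_tan hu hv
      have hc : m / sβ ≠ 0 := div_ne_zero hm0 hsβ0
      exact mul_left_cancel₀ hc h
    have himg : f '' s = Set.univ := by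
      ext p
      simp only [Set.mem_univ, iff_true, Set.mem_image]
      refine ⟨Real.arctan (p * sβ / m), Real.arctan_mem_Ioo _, ?_⟩
      rw [hfdef]
      simp only [Real.tan_arctan]
      field_simp
    have step1 : (∫ p : ℝ, (starRingEnd ℂ) (ψ x p) * ψ x' p)
        = ∫ u in s, |f' u| • ((starRingEnd ℂ) (ψ x (f u)) * ψ x' (f u)) := by
      rw [← MeasureTheory.setIntegral_univ, ← himg]
      exact MeasureTheory.integral_image_eq_integral_abs_deriv_smul hs hderiv hinj _
    have step2 : ∀ u ∈ s, |f' u| • ((starRingEnd ℂ) (ψ x (f u)) * ψ x' (f u))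
        = ((Real.pi⁻¹ : ℝ) : ℂ) * Complex.exp (Complex.I * a * u) := by
      intro u hu
      have hcos : Real.cos u ≠ 0 := hcosne u hu
      have hcos2 : (0:ℝ) < Real.cos u ^ 2 := by positivity
      have harc : Real.arctan (f u * sβ / m) = u := by
        have : f u * sβ / m = Real.tan u := by rw [hfdef]; field_simp
        rw [this, Real.arctan_tan hu.1 hu.2]
      have hden : m ^ 2 + β * f u ^ 2 = m ^ 2 / Real.cos u ^ 2 := by
        have hβeq : sβ ^ 2 = β := Real.sq_sqrt hβ.le
        have hsc : Real.sin u ^ 2 + Real.cos u ^ 2 = 1 := Real.sin_sq_add_cos_sq u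
        have h1 : f u ^ 2 = m ^ 2 * Real.tan u ^ 2 / β := by
          rw [hfdef]; simp only; rw [mul_pow, div_pow, hβeq]; ring
        rw [h1, Real.tan_eq_sin_div_cos, div_pow]
        field_simp
        linear_combination hsc
      have hC2 : (Real.sqrt (m / Real.pi) * β ^ ((1 : ℝ) / 4)) ^ 2 = m / Real.pi * sβ := by
        have h1 : Real.sqrt (m / Real.pi) ^ 2 = m / Real.pi :=
          Real.sq_sqrt (by positivity)
        have h2 : (β ^ ((1 : ℝ) / 4)) ^ 2 = sβ := by
          rw [← Real.rpow_natCast (β ^ ((1:ℝ)/4)) 2, ← Real.rpow_mul hβ.le]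
          norm_num
          rw [hsβdef, Real.sqrt_eq_rpow]
        rw [mul_pow, h1, h2]
      have hsqrtden : Real.sqrt (m ^ 2 + β * f u ^ 2) ^ 2 = m ^ 2 + β * f u ^ 2 :=
        Real.sq_sqrt (by positivity)
      rw [hψ, hψ, harc]
      rw [map_div₀, map_mul, Complex.conj_ofReal, ← Complex.exp_conj, Complex.conj_ofReal]
      have hexparg : (starRingEnd ℂ) (-Complex.I * x * m * (u:ℝ) / ((hbar:ℝ) * (sβ:ℝ)))
            + (-Complex.I * x' * m * (u:ℝ) / ((hbar:ℝ) * (sβ:ℝ)))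
          = Complex.I * a * u := by
        simp only [map_div₀, map_mul, map_neg, Complex.conj_I, Complex.conj_ofReal]
        have hH : ((hbar:ℂ) * (sβ:ℂ)) ≠ 0 := by
          simp [Complex.ofReal_ne_zero, hh0, hsβ0]
        rw [hadef]
        push_cast
        field_simp
        ring
      rw [div_mul_div_comm, mul_mul_mul_comm, ← Complex.exp_add, hexparg]
      have habs : |f' u| = m / sβ * (1 / Real.cos u ^ 2) := by
        rw [hf'def]
        exact abs_of_pos (by positivity)
      rw [habs, Complex.real_smul]
      have hCC : ((Real.sqrt (m / Real.pi) * β ^ ((1 : ℝ) / 4) : ℝ) : ℂ) *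
            ((Real.sqrt (m / Real.pi) * β ^ ((1 : ℝ) / 4) : ℝ) : ℂ)
          = ((m / Real.pi * sβ : ℝ) : ℂ) := by
        rw [← Complex.ofReal_mul, ← pow_two, hC2]
      have hDDc : ((Real.sqrt (m ^ 2 + β * f u ^ 2) : ℝ) : ℂ) *
            ((Real.sqrt (m ^ 2 + β * f u ^ 2) : ℝ) : ℂ)
          = ((m ^ 2 / Real.cos u ^ 2 : ℝ) : ℂ) := by
        rw [← Complex.ofReal_mul, Real.mul_self_sqrt (by positivity), hden]
      rw [hCC, hDDc]
      have hkr : Real.pi⁻¹ = m / sβ * (1 / Real.cos u ^ 2) * (m / Real.pi * sβ) /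
          (m ^ 2 / Real.cos u ^ 2) := by
        field_simp
      rw [show ((Real.pi⁻¹ : ℝ) : ℂ) = ((m / sβ * (1 / Real.cos u ^ 2) * (m / Real.pi * sβ) /
          (m ^ 2 / Real.cos u ^ 2) : ℝ) : ℂ) from by rw [← hkr]]
      push_cast
      ring
    have step3 : (∫ u in s, |f' u| • ((starRingEnd ℂ) (ψ x (f u)) * ψ x' (f u)))
        = ∫ u in s, ((Real.pi⁻¹ : ℝ) : ℂ) * Complex.exp (Complex.I * a * u) := by
      apply MeasureTheory.setIntegral_congr_fun hs
      intro u hu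
      exact step2 u hu
    have hc0 : (Complex.I * (a : ℂ)) ≠ 0 :=
      mul_ne_zero Complex.I_ne_zero (by exact_mod_cast ha0)
    have step4 : (∫ u in s, ((Real.pi⁻¹ : ℝ) : ℂ) * Complex.exp (Complex.I * a * u))
        = ((2 / (Real.pi * a) * Real.sin (a * Real.pi / 2) : ℝ) : ℂ) := by
      rw [MeasureTheory.integral_const_mul]
      have hle : -(Real.pi / 2) ≤ Real.pi / 2 := by linarith
      have : (∫ u in s, Complex.exp (Complex.I * a * u))
          = ∫ u in (-(Real.pi / 2))..(Real.pi / 2), Complex.exp (Complex.I * (a:ℂ) * u) := by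
        rw [intervalIntegral.integral_of_le hle, MeasureTheory.integral_Ioc_eq_integral_Ioo]
      rw [this, integral_exp_mul_complex hc0]
      have e1 : ((a * Real.pi / 2 : ℝ) : ℂ) * Complex.I
          = Complex.I * (a : ℂ) * ((Real.pi / 2 : ℝ) : ℂ) := by push_cast; ring
      have e2 : -((a * Real.pi / 2 : ℝ) : ℂ) * Complex.I
          = Complex.I * (a : ℂ) * ((-(Real.pi / 2) : ℝ) : ℂ) := by push_cast; ring
      have hsin : Complex.exp (Complex.I * (a : ℂ) * ((Real.pi / 2 : ℝ) : ℂ))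
            - Complex.exp (Complex.I * (a : ℂ) * ((-(Real.pi / 2) : ℝ) : ℂ))
          = 2 * Complex.I * Complex.sin ((a * Real.pi / 2 : ℝ) : ℂ) := by
        rw [← e1, ← e2, Complex.exp_mul_I, Complex.exp_mul_I, Complex.cos_neg, Complex.sin_neg]
        ring
      rw [hsin, ← Complex.ofReal_sin]
      have hπC : ((Real.pi : ℝ) : ℂ) ≠ 0 := Complex.ofReal_ne_zero.mpr hπ0
      have haC : ((a : ℝ) : ℂ) ≠ 0 := Complex.ofReal_ne_zero.mpr ha0
      push_cast
      field_simp
    rw [step1, step3, step4]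
  -- rewrite the closed form in the requested shape
  have hform : (2 / (Real.pi * a) * Real.sin (a * Real.pi / 2) : ℝ)
      = (2 * hbar * sβ / (m * Real.pi * (x' - x))) *
          Real.sin (m * Real.pi * (x' - x) / (2 * hbar * sβ)) := by
    have harg : a * Real.pi / 2 = -(m * Real.pi * (x' - x) / (2 * hbar * sβ)) := by
      rw [hadef]; field_simp; ring
    rw [harg, Real.sin_neg, hadef]
    field_simp
    ring
  constructor
  · rw [key, hform]
  · rw [key, hform]
    rw [Complex.ofReal_eq_zero]
    have hK : (2 * hbar * sβ / (m * Real.pi * (x' - x))) ≠ 0 := by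
      apply div_ne_zero (by positivity)
      exact mul_ne_zero (mul_ne_zero hm0 hπ0) hdx
    rw [mul_eq_zero]
    constructor
    · rintro (h | h)
      · exact absurd h hK
      · rw [Real.sin_eq_zero_iff] at h
        obtain ⟨n, hn⟩ := h
        rw [eq_div_iff (by positivity : (2 * hbar * sβ) ≠ 0)] at hn
        refine ⟨n, ?_, ?_⟩
        · intro h0
          rw [h0] at hn
          simp only [Int.cast_zero, zero_mul] at hn
          simp only [eq_comm, mul_eq_zero, hm0, hπ0, sub_eq_zero, false_or] at hn
          exact hxx' hn
        · have hn2 : (n : ℝ) * (2 * hbar * sβ) = m * (x' - x) :=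
            mul_left_cancel₀ hπ0 (by linear_combination hn)
          field_simp
          linear_combination (-1 : ℝ) * hn2
    · rintro ⟨n, hn0, hn⟩
      right
      rw [Real.sin_eq_zero_iff]
      refine ⟨n, ?_⟩
      rw [hn]
      field_simp
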